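/- SI_GH is subadditive: if (S1,Y1,Z1) is independent of (S2,Y2,Z2), then SI_GH(S1S2;Y1Y2,Z1Z2) ≤ SI_GH(S1;Y1,Z1) + SI_GH(S2;Y2,Z2). Consequently, combined with superadditivity, SI_GH is additive. -/

import Mathlib

open scoped BigOperators

/-- A probability distribution on a finite type. -/
def IsProbDist {A : Type} [Fintype A] (p : A → ℝ) : Prop :=
  (∀ x, 0 ≤ p x) ∧ ∑ x, p x = 1

/-- Shannon mutual information `I(A;B)` of a joint distribution on `A × B`. -/
noncomputable def mi2 {A B : Type} [Fintype A] [Fintype B] (p : A × B → ℝ) : ℝ :=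
  ∑ a, ∑ b, p (a, b) * Real.log (p (a, b) / ((∑ b', p (a, b')) * (∑ a', p (a', b))))

/-- Conditional mutual information `I(A;B|C)` of a joint distribution on `A × B × C`. -/
noncomputable def cmi3 {A B C : Type} [Fintype A] [Fintype B] [Fintype C]
    (p : A × B × C → ℝ) : ℝ :=
  ∑ a, ∑ b, ∑ c, p (a, b, c) *
    Real.log ((p (a, b, c) * (∑ a', ∑ b', p (a', b', c))) /
      ((∑ b', p (a, b', c)) * (∑ a', p (a', b, c))))

/-- Marginal distribution of `(S,Y)`. -/
noncomputable def margSY {S Y Z : Type} [Fintype S] [Fintype Y] [Fintype Z]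
    (p : S × Y × Z → ℝ) : S × Y → ℝ := fun x => ∑ z, p (x.1, x.2, z)

/-- Marginal distribution of `(S,Z)`. -/
noncomputable def margSZ {S Y Z : Type} [Fintype S] [Fintype Y] [Fintype Z]
    (p : S × Y × Z → ℝ) : S × Z → ℝ := fun x => ∑ y, p (x.1, y, x.2)

/-- `I(S;Y)`. -/
noncomputable def ISY {S Y Z : Type} [Fintype S] [Fintype Y] [Fintype Z]
    (p : S × Y × Z → ℝ) : ℝ := mi2 (margSY p)

/-- `I(S;Z)`. -/
noncomputable def ISZ {S Y Z : Type} [Fintype S] [Fintype Y] [Fintype Z]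
    (p : S × Y × Z → ℝ) : ℝ := mi2 (margSZ p)

/-- `I(S;YZ)`, the mutual information of `S` with the pair `(Y,Z)`. -/
noncomputable def ISYZ {S Y Z : Type} [Fintype S] [Fintype Y] [Fintype Z]
    (p : S × Y × Z → ℝ) : ℝ := mi2 p

/-- `I(S;Y|Z)`. -/
noncomputable def ISYgZ {S Y Z : Type} [Fintype S] [Fintype Y] [Fintype Z]
    (p : S × Y × Z → ℝ) : ℝ := cmi3 p

/-- The same joint distribution, with the roles of `Y` and `Z` exchanged. -/
def swapYZ {S Y Z : Type} (p : S × Y × Z → ℝ) : S × Z × Y → ℝ :=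
  fun x => p (x.1, x.2.2, x.2.1)

/-- `I(S;Z|Y)`. -/
noncomputable def ISZgY {S Y Z : Type} [Fintype S] [Fintype Y] [Fintype Z]
    (p : S × Y × Z → ℝ) : ℝ := ISYgZ (swapYZ p)

/-- The joint distribution of two independent triples, grouped componentwise. -/
def prodDist {S1 Y1 Z1 S2 Y2 Z2 : Type}
    (p1 : S1 × Y1 × Z1 → ℝ) (p2 : S2 × Y2 × Z2 → ℝ) :
    (S1 × S2) × (Y1 × Y2) × (Z1 × Z2) → ℝ :=
  fun x => p1 (x.1.1, x.2.1.1, x.2.2.1) * p2 (x.1.2, x.2.1.2, x.2.2.2)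

/-- `SI_GH(S;Y,Z) = max { I(Q;S) : I(S;Q|Y) = I(S;Q|Z) = 0 }`, the supremum
running over all finite random variables `Q` jointly distributed with `(S,Y,Z)`
(extending the given joint distribution) such that `S ⊥ Q | Y` and `S ⊥ Q | Z`. -/
noncomputable def SIGH {S Y Z : Type} [Fintype S] [Fintype Y] [Fintype Z]
    (p : S × Y × Z → ℝ) : ℝ :=
  sSup { r : ℝ | ∃ (Q : Type) (instQ : Fintype Q) (e : S × Y × Z × Q → ℝ),
      (∀ x, 0 ≤ e x) ∧
      (∀ s y z, (∑ q ∈ @Finset.univ Q instQ, e (s, y, z, q)) = p (s, y, z)) ∧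
      @cmi3 S Q Y _ instQ _ (fun x => ∑ z, e (x.1, x.2.2, z, x.2.1)) = 0 ∧
      @cmi3 S Q Z _ instQ _ (fun x => ∑ y, e (x.1, y, x.2.2, x.2.1)) = 0 ∧
      r = @mi2 S Q _ instQ (fun x => ∑ y, ∑ z, e (x.1, y, z, x.2)) }

lemma gibbs_term {p q : ℝ} (hp : 0 ≤ p) (hq : 0 ≤ q) (hpq : 0 < p → 0 < q) :
    p - q ≤ p * Real.log (p / q) := by
  rcases eq_or_lt_of_le hp with h | h
  · simp [← h, hq]
  · have hq' := hpq h
    have h1 : Real.log (q / p) ≤ q / p - 1 :=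
      Real.log_le_sub_one_of_pos (div_pos hq' h)
    have h2 : Real.log (p / q) = - Real.log (q / p) := by
      rw [← Real.log_inv, inv_div]
    rw [h2]
    nlinarith [mul_le_mul_of_nonneg_left h1 hp,
      mul_div_cancel₀ q (ne_of_gt h)]

lemma gibbs_term_strict {p q : ℝ} (hp : 0 < p) (hq : 0 < q) (hne : p ≠ q) :
    p - q < p * Real.log (p / q) := by
  have h1 : Real.log (q / p) < q / p - 1 :=
    Real.log_lt_sub_one_of_pos (div_pos hq hp)
      (fun h => hne (by field_simp at h; linarith))
  have h2 : Real.log (p / q) = - Real.log (q / p) := by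
    rw [← Real.log_inv, inv_div]
  rw [h2]
  nlinarith [mul_lt_mul_of_pos_left h1 hp, mul_div_cancel₀ q (ne_of_gt hp)]

lemma gibbs_sum {ι : Type} [Fintype ι] {p q : ι → ℝ} (hp : ∀ i, 0 ≤ p i)
    (hq : ∀ i, 0 ≤ q i) (hpq : ∀ i, 0 < p i → 0 < q i) :
    (∑ i, p i) - (∑ i, q i) ≤ ∑ i, p i * Real.log (p i / q i) := by
  rw [← Finset.sum_sub_distrib]
  exact Finset.sum_le_sum fun i _ => gibbs_term (hp i) (hq i) (hpq i)

lemma gibbs_eq {ι : Type} [Fintype ι] {p q : ι → ℝ} (hp : ∀ i, 0 ≤ p i)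
    (hq : ∀ i, 0 ≤ q i) (hpq : ∀ i, 0 < p i → 0 < q i)
    (htot : ∑ i, q i = ∑ i, p i)
    (hzero : ∑ i, p i * Real.log (p i / q i) = 0) : ∀ i, p i = q i := by
  have hsum : ∑ i, (p i * Real.log (p i / q i) - (p i - q i)) = 0 := by
    rw [Finset.sum_sub_distrib, hzero, Finset.sum_sub_distrib, htot]
    ring
  have heach : ∀ i ∈ Finset.univ, p i * Real.log (p i / q i) - (p i - q i) = 0 :=
    (Finset.sum_eq_zero_iff_of_nonneg
      (fun i _ => sub_nonneg.2 (gibbs_term (hp i) (hq i) (hpq i)))).1 hsum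
  intro i
  have h := sub_eq_zero.1 (heach i (Finset.mem_univ i))
  by_contra hne
  rcases eq_or_lt_of_le (hp i) with h0 | h0
  · apply hne
    rw [← h0] at h ⊢
    have h2 : q i = 0 := by simpa using h.symm
    rw [h2]
  · exact absurd h.symm (ne_of_lt (gibbs_term_strict h0 (hpq i h0) hne))

lemma sum3 {A B C : Type} [Fintype A] [Fintype B] [Fintype C] (f : A × B × C → ℝ) :
    ∑ x, f x = ∑ a, ∑ b, ∑ c, f (a, b, c) := by
  simp [Fintype.sum_prod_type]

lemma sum3_rot {A B C : Type} [Fintype A] [Fintype B] [Fintype C] (f : A → B → C → ℝ) :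
    ∑ a, ∑ b, ∑ c, f a b c = ∑ c, ∑ a, ∑ b, f a b c := by
  have h1 : ∀ a, (∑ b, ∑ c, f a b c) = ∑ c, ∑ b, f a b c := fun a => Finset.sum_comm
  simp only [h1]
  exact Finset.sum_comm

lemma cmi3_eq_zero_iff {A B C : Type} [Fintype A] [Fintype B] [Fintype C]
    {p : A × B × C → ℝ} (hp : ∀ x, 0 ≤ p x) :
    cmi3 p = 0 ↔ ∀ a b c, p (a, b, c) * (∑ a', ∑ b', p (a', b', c)) =
      (∑ b', p (a, b', c)) * (∑ a', p (a', b, c)) := by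
  classical
  set M : C → ℝ := fun c => ∑ a', ∑ b', p (a', b', c) with hMdef
  set X : A → C → ℝ := fun a c => ∑ b', p (a, b', c) with hXdef
  set Y : B → C → ℝ := fun b c => ∑ a', p (a', b, c) with hYdef
  have hXnn : ∀ a c, 0 ≤ X a c := fun a c => Finset.sum_nonneg fun _ _ => hp _
  have hYnn : ∀ b c, 0 ≤ Y b c := fun b c => Finset.sum_nonneg fun _ _ => hp _
  have hMnn : ∀ c, 0 ≤ M c := fun c =>
    Finset.sum_nonneg fun a _ => hXnn a c
  have hpX : ∀ a b c, p (a, b, c) ≤ X a c := fun a b c =>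
    Finset.single_le_sum (fun b' _ => hp (a, b', c)) (Finset.mem_univ b)
  have hpY : ∀ a b c, p (a, b, c) ≤ Y b c := fun a b c =>
    Finset.single_le_sum (fun a' _ => hp (a', b, c)) (Finset.mem_univ a)
  have hXM : ∀ a c, X a c ≤ M c := fun a c =>
    Finset.single_le_sum (fun a' _ => hXnn a' c) (Finset.mem_univ a)
  have hpM : ∀ a b c, p (a, b, c) ≤ M c := fun a b c =>
    le_trans (hpX a b c) (hXM a c)
  have hYsum : ∀ c, ∑ b, Y b c = M c := fun c => Finset.sum_comm
  have hcmi : cmi3 p = ∑ a, ∑ b, ∑ c, p (a, b, c) *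
      Real.log (p (a, b, c) * M c / (X a c * Y b c)) := rfl
  rw [hcmi]
  have hgoal : (∀ a b c, p (a, b, c) * (∑ a', ∑ b', p (a', b', c)) =
      (∑ b', p (a, b', c)) * (∑ a', p (a', b, c))) ↔
      (∀ a b c, p (a, b, c) * M c = X a c * Y b c) := Iff.rfl
  rw [hgoal]
  constructor
  · intro h a b c
    set Qf : A × B × C → ℝ := fun x => X x.1 x.2.2 * Y x.2.1 x.2.2 / M x.2.2 with hQdef
    have hQnn : ∀ x, 0 ≤ Qf x := fun x =>
      div_nonneg (mul_nonneg (hXnn _ _) (hYnn _ _)) (hMnn _)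
    have hppos : ∀ x, 0 < p x → 0 < Qf x := by
      rintro ⟨a, b, c⟩ hx
      exact div_pos (mul_pos (lt_of_lt_of_le hx (hpX a b c))
        (lt_of_lt_of_le hx (hpY a b c))) (lt_of_lt_of_le hx (hpM a b c))
    have htot : ∑ x, Qf x = ∑ x, p x := by
      rw [sum3, sum3, sum3_rot (fun a b c => Qf (a, b, c)),
        sum3_rot (fun a b c => p (a, b, c))]
      refine Finset.sum_congr rfl fun c _ => ?_
      have h1 : ∑ a, ∑ b, Qf (a, b, c) = (∑ a, X a c) * (∑ b, Y b c) / M c := by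
        rw [Finset.sum_mul_sum, Finset.sum_div]
        exact Finset.sum_congr rfl fun a _ => by rw [Finset.sum_div]
      rw [h1, hYsum]
      have h2 : (∑ a, X a c) = M c := rfl
      rw [h2]
      rcases eq_or_ne (M c) 0 with h0 | h0
      · simp [h0]
      · field_simp
    have hzero : ∑ x, p x * Real.log (p x / Qf x) = 0 := by
      rw [← h]
      rw [sum3 (fun x => p x * Real.log (p x / Qf x))]
      refine Finset.sum_congr rfl fun a' _ => Finset.sum_congr rfl fun b' _ =>
        Finset.sum_congr rfl fun c' _ => ?_
      rcases eq_or_lt_of_le (hp (a', b', c')) with h0 | h0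
      · rw [← h0]; ring
      · congr 1
        rw [hQdef]
        simp only
        rw [div_div_eq_mul_div]
    have := gibbs_eq hp hQnn hppos htot hzero (a, b, c)
    rcases eq_or_lt_of_le (hMnn c) with h0 | h0
    · have hp0 : p (a, b, c) = 0 := le_antisymm (h0 ▸ hpM a b c) (hp _)
      have hX0 : X a c = 0 := le_antisymm (h0 ▸ hXM a c) (hXnn _ _)
      rw [hp0, hX0, ← h0]; ring
    · rw [this]
      show X a c * Y b c / M c * M c = X a c * Y b c
      field_simp
  · intro h
    refine Finset.sum_eq_zero fun a _ => Finset.sum_eq_zero fun b _ =>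
      Finset.sum_eq_zero fun c _ => ?_
    rcases eq_or_lt_of_le (hp (a, b, c)) with h0 | h0
    · rw [← h0]; ring
    · have hXpos : 0 < X a c := lt_of_lt_of_le h0 (hpX a b c)
      have hYpos : 0 < Y b c := lt_of_lt_of_le h0 (hpY a b c)
      have : p (a, b, c) * M c / (X a c * Y b c) = 1 := by
        rw [h a b c]
        exact div_self (ne_of_gt (mul_pos hXpos hYpos))
      rw [this, Real.log_one, mul_zero]

lemma mi2_le_log_card {A B : Type} [Fintype A] [Fintype B] {p : A × B → ℝ}
    (hnn : ∀ x, 0 ≤ p x) (htot : ∑ x, p x = 1) :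
    mi2 p ≤ Real.log (Fintype.card A) := by
  classical
  set X : A → ℝ := fun a => ∑ b, p (a, b) with hXdef
  set Y : B → ℝ := fun b => ∑ a, p (a, b) with hYdef
  have hXnn : ∀ a, 0 ≤ X a := fun a => Finset.sum_nonneg fun _ _ => hnn _
  have hYnn : ∀ b, 0 ≤ Y b := fun b => Finset.sum_nonneg fun _ _ => hnn _
  have hpX : ∀ a b, p (a, b) ≤ X a := fun a b =>
    Finset.single_le_sum (fun b' _ => hnn (a, b')) (Finset.mem_univ b)
  have hpY : ∀ a b, p (a, b) ≤ Y b := fun a b =>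
    Finset.single_le_sum (fun a' _ => hnn (a', b)) (Finset.mem_univ a)
  have hXtot : ∑ a, X a = 1 := by rw [← htot, Fintype.sum_prod_type]
  have hmi : mi2 p = ∑ a, ∑ b, p (a, b) * Real.log (p (a, b) / (X a * Y b)) := rfl
  -- Step 1 : mi2 p ≤ - ∑ a, X a * log (X a)
  have step1 : mi2 p ≤ ∑ a, X a * (- Real.log (X a)) := by
    rw [hmi]
    have : ∀ a, X a * (- Real.log (X a)) = ∑ b, p (a, b) * (- Real.log (X a)) := by
      intro a; rw [← Finset.sum_mul]
    simp only [this]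
    refine Finset.sum_le_sum fun a _ => Finset.sum_le_sum fun b _ => ?_
    rcases eq_or_lt_of_le (hnn (a, b)) with h0 | h0
    · rw [← h0]; simp
    · have hX : 0 < X a := lt_of_lt_of_le h0 (hpX a b)
      have hY : 0 < Y b := lt_of_lt_of_le h0 (hpY a b)
      refine mul_le_mul_of_nonneg_left ?_ (le_of_lt h0)
      have harg : p (a, b) / (X a * Y b) ≤ (X a)⁻¹ := by
        rw [div_le_iff₀ (mul_pos hX hY)]
        have : (X a)⁻¹ * (X a * Y b) = Y b := by field_simp
        rw [this]; exact hpY a b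
      calc Real.log (p (a, b) / (X a * Y b)) ≤ Real.log ((X a)⁻¹) :=
            Real.log_le_log (div_pos h0 (mul_pos hX hY)) harg
        _ = - Real.log (X a) := Real.log_inv _
  -- Step 2 : entropy bound
  have hcard : 0 < Fintype.card A := by
    by_contra h0
    have : Fintype.card A = 0 := Nat.eq_zero_of_not_pos h0
    have hempty : IsEmpty A := Fintype.card_eq_zero_iff.1 this
    rw [Finset.sum_eq_zero (fun a _ => (hempty.false a).elim)] at hXtot
    norm_num at hXtot
  set N : ℝ := (Fintype.card A : ℝ) with hNdef
  have hNpos : 0 < N := by rw [hNdef]; exact_mod_cast hcard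
  have step2 : 0 ≤ ∑ a, X a * Real.log (X a / N⁻¹) := by
    have := gibbs_sum (p := X) (q := fun _ => N⁻¹) hXnn
      (fun _ => le_of_lt (inv_pos.2 hNpos)) (fun _ _ => inv_pos.2 hNpos)
    simp only [Finset.sum_const, Finset.card_univ, nsmul_eq_mul, hXtot] at this
    have hN1 : (Fintype.card A : ℝ) * N⁻¹ = 1 := by
      rw [← hNdef]; field_simp
    rw [hN1] at this; linarith
  have expand : ∀ a, X a * Real.log (X a / N⁻¹) =
      X a * Real.log (X a) + X a * Real.log N := by
    intro a
    rcases eq_or_lt_of_le (hXnn a) with h0 | h0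
    · rw [← h0]; ring
    · rw [div_inv_eq_mul, Real.log_mul (ne_of_gt h0) (ne_of_gt hNpos)]; ring
  rw [Finset.sum_congr rfl (fun a _ => expand a), Finset.sum_add_distrib,
    ← Finset.sum_mul, hXtot, one_mul] at step2
  have : ∑ a, X a * (- Real.log (X a)) = - ∑ a, X a * Real.log (X a) := by
    rw [← Finset.sum_neg_distrib]; exact Finset.sum_congr rfl fun a _ => by ring
  linarith [step1, this ▸ step1]

lemma chain_pointwise {t PS PQ P1 M1 : ℝ} (ht : 0 ≤ t) (htPS : t ≤ PS)
    (htPQ : t ≤ PQ) (htP1 : t ≤ P1) (hP1M : P1 ≤ M1) :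
    t * Real.log (t / (PS * PQ)) =
      t * Real.log (P1 / (M1 * PQ)) + t * Real.log (t * M1 / (PS * P1)) := by
  rcases eq_or_lt_of_le ht with h0 | h0
  · rw [← h0]; ring
  · have hPS : 0 < PS := lt_of_lt_of_le h0 htPS
    have hPQ : 0 < PQ := lt_of_lt_of_le h0 htPQ
    have hP1 : 0 < P1 := lt_of_lt_of_le h0 htP1
    have hM1 : 0 < M1 := lt_of_lt_of_le hP1 hP1M
    have harg : t / (PS * PQ) = (P1 / (M1 * PQ)) * (t * M1 / (PS * P1)) := by
      field_simp
    rw [harg, Real.log_mul (ne_of_gt (div_pos hP1 (mul_pos hM1 hPQ)))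
      (ne_of_gt (div_pos (mul_pos h0 hM1) (mul_pos hPS hP1))), mul_add]

lemma chain_rule {S1 S2 Q : Type} [Fintype S1] [Fintype S2] [Fintype Q]
    {P : (S1 × S2) × Q → ℝ} (hnn : ∀ x, 0 ≤ P x) :
    mi2 P = mi2 (fun x : S1 × Q => ∑ s2, P ((x.1, s2), x.2)) +
      cmi3 (fun x : S2 × Q × S1 => P ((x.2.2, x.1), x.2.1)) := by
  classical
  -- normalize each of the three terms to a triple sum over s1, s2, q
  have hA : mi2 P = ∑ s1, ∑ s2, ∑ q, P ((s1, s2), q) *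
      Real.log (P ((s1, s2), q) /
        ((∑ q', P ((s1, s2), q')) * (∑ s1', ∑ s2', P ((s1', s2'), q)))) := by
    unfold mi2
    rw [Fintype.sum_prod_type]
    exact Finset.sum_congr rfl fun s1 _ => Finset.sum_congr rfl fun s2 _ =>
      Finset.sum_congr rfl fun q _ => by rw [Fintype.sum_prod_type]
  have hB : mi2 (fun x : S1 × Q => ∑ s2, P ((x.1, s2), x.2)) =
      ∑ s1, ∑ s2, ∑ q, P ((s1, s2), q) *
        Real.log ((∑ s2', P ((s1, s2'), q)) /
          ((∑ q', ∑ s2', P ((s1, s2'), q')) * (∑ s1', ∑ s2', P ((s1', s2'), q)))) := by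
    unfold mi2
    refine Finset.sum_congr rfl fun s1 _ => ?_
    simp only [Finset.sum_mul]
    exact Finset.sum_comm
  have hC : cmi3 (fun x : S2 × Q × S1 => P ((x.2.2, x.1), x.2.1)) =
      ∑ s1, ∑ s2, ∑ q, P ((s1, s2), q) *
        Real.log ((P ((s1, s2), q) * (∑ q', ∑ s2', P ((s1, s2'), q'))) /
          ((∑ q', P ((s1, s2), q')) * (∑ s2', P ((s1, s2'), q)))) := by
    unfold cmi3
    rw [sum3_rot]
    refine Finset.sum_congr rfl fun s1 _ => Finset.sum_congr rfl fun s2 _ =>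
      Finset.sum_congr rfl fun q _ => ?_
    simp only
    rw [Finset.sum_comm]
  rw [hA, hB, hC, ← Finset.sum_add_distrib]
  refine Finset.sum_congr rfl fun s1 _ => ?_
  rw [← Finset.sum_add_distrib]
  refine Finset.sum_congr rfl fun s2 _ => ?_
  rw [← Finset.sum_add_distrib]
  refine Finset.sum_congr rfl fun q _ => ?_
  refine chain_pointwise (hnn _) ?_ ?_ ?_ ?_
  · exact Finset.single_le_sum (f := fun q' => P ((s1, s2), q'))
      (fun q' _ => hnn _) (Finset.mem_univ q)
  · calc P ((s1, s2), q) ≤ ∑ s2', P ((s1, s2'), q) :=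
        Finset.single_le_sum (f := fun s2' => P ((s1, s2'), q))
          (fun s2' _ => hnn _) (Finset.mem_univ s2)
      _ ≤ ∑ s1', ∑ s2', P ((s1', s2'), q) :=
        Finset.single_le_sum (f := fun s1' => ∑ s2', P ((s1', s2'), q))
          (fun s1' _ => Finset.sum_nonneg fun _ _ => hnn _) (Finset.mem_univ s1)
  · exact Finset.single_le_sum (f := fun s2' => P ((s1, s2'), q))
      (fun s2' _ => hnn _) (Finset.mem_univ s2)
  · exact Finset.single_le_sum (f := fun q' => ∑ s2', P ((s1, s2'), q'))
      (fun q' _ => Finset.sum_nonneg fun _ _ => hnn _) (Finset.mem_univ q)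

lemma cmi3_slices {A B C : Type} [Fintype A] [Fintype B] [Fintype C]
    {p : A × B × C → ℝ} (hnn : ∀ x, 0 ≤ p x) :
    cmi3 p = ∑ c, (∑ a, ∑ b, p (a, b, c)) *
      mi2 (fun x : A × B => p (x.1, x.2, c) / (∑ a, ∑ b, p (a, b, c))) := by
  classical
  unfold cmi3
  rw [sum3_rot]
  refine Finset.sum_congr rfl fun c _ => ?_
  set M : ℝ := ∑ a, ∑ b, p (a, b, c) with hMdef
  have hMnn : 0 ≤ M := Finset.sum_nonneg fun a _ => Finset.sum_nonneg fun b _ => hnn _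
  have hpM : ∀ a b, p (a, b, c) ≤ M := by
    intro a b
    calc p (a, b, c) ≤ ∑ b', p (a, b', c) :=
        Finset.single_le_sum (f := fun b' => p (a, b', c)) (fun _ _ => hnn _)
          (Finset.mem_univ b)
      _ ≤ M := Finset.single_le_sum (f := fun a' => ∑ b', p (a', b', c))
          (fun _ _ => Finset.sum_nonneg fun _ _ => hnn _) (Finset.mem_univ a)
  rcases eq_or_lt_of_le hMnn with h0 | h0
  · have hz : ∀ a b, p (a, b, c) = 0 := fun a b =>
      le_antisymm (h0 ▸ hpM a b) (hnn _)
    rw [← h0, zero_mul]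
    exact Finset.sum_eq_zero fun a _ => Finset.sum_eq_zero fun b _ => by
      rw [hz a b]; ring
  · unfold mi2
    rw [Finset.mul_sum]
    refine Finset.sum_congr rfl fun a _ => ?_
    rw [Finset.mul_sum]
    refine Finset.sum_congr rfl fun b _ => ?_
    simp only
    have hX : (∑ b', p (a, b', c) / M) = (∑ b', p (a, b', c)) / M := by
      rw [Finset.sum_div]
    have hY : (∑ a', p (a', b, c) / M) = (∑ a', p (a', b, c)) / M := by
      rw [Finset.sum_div]
    rw [hX, hY]
    have harg : p (a, b, c) / M / ((∑ b', p (a, b', c)) / M * ((∑ a', p (a', b, c)) / M))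
        = p (a, b, c) * M / ((∑ b', p (a, b', c)) * (∑ a', p (a', b, c))) := by
      rw [div_mul_div_comm, div_div_eq_mul_div, div_mul_eq_mul_div,
        mul_div_assoc (p (a, b, c)), mul_self_div_self]
    rw [harg, ← mul_assoc, mul_div_cancel₀ _ (ne_of_gt h0)]

lemma exists_good_slice {C : Type} [Fintype C] (w x : C → ℝ) (hw : ∀ c, 0 ≤ w c)
    (hsum : ∑ c, w c = 1) : ∃ c, 0 < w c ∧ ∑ c', w c' * x c' ≤ x c := by
  by_contra h
  push_neg at h
  have hex : ∃ c, 0 < w c := by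
    by_contra h2
    push_neg at h2
    rw [Finset.sum_eq_zero (fun c _ => le_antisymm (h2 c) (hw c))] at hsum
    norm_num at hsum
  obtain ⟨c0, hc0⟩ := hex
  have hlt : ∑ c, w c * x c < ∑ c, w c * (∑ c', w c' * x c') := by
    refine Finset.sum_lt_sum (fun c _ => ?_) ⟨c0, Finset.mem_univ c0, ?_⟩
    · rcases eq_or_lt_of_le (hw c) with h0 | h0
      · rw [← h0]; simp
      · exact le_of_lt (mul_lt_mul_of_pos_left (h c h0) h0)
    · exact mul_lt_mul_of_pos_left (h c0 hc0) hc0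
  rw [← Finset.sum_mul, hsum, one_mul] at hlt
  exact lt_irrefl _ hlt

section
variable {S1 S2 Q W1 W2 : Type} [Fintype S1] [Fintype S2] [Fintype Q]
  [Fintype W1] [Fintype W2]

lemma marg_facts
    (G : (S1 × S2) × Q × (W1 × W2) → ℝ) (a : S1 × W1 → ℝ) (b : S2 × W2 → ℝ)
    (hG : ∀ x, 0 ≤ G x) (ha : ∀ x, 0 ≤ a x) (hb : ∀ x, 0 ≤ b x)
    (hmarg : ∀ s1 s2 w1 w2, (∑ q, G ((s1, s2), q, (w1, w2))) = a (s1, w1) * b (s2, w2))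
    (hfact : ∀ s q w, G (s, q, w) * (∑ s', ∑ q', G (s', q', w)) =
      (∑ q', G (s, q', w)) * (∑ s', G (s', q, w))) :
    (∀ s1 q w1, (∑ s2, ∑ w2, G ((s1, s2), q, (w1, w2))) *
        (∑ s1', ∑ q', ∑ s2, ∑ w2, G ((s1', s2), q', (w1, w2))) =
      (∑ q', ∑ s2, ∑ w2, G ((s1, s2), q', (w1, w2))) *
        (∑ s1', ∑ s2, ∑ w2, G ((s1', s2), q, (w1, w2)))) ∧
    (∀ s1 s2 q w2, (∑ w1, G ((s1, s2), q, (w1, w2))) *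
        (∑ s2', ∑ q', ∑ w1, G ((s1, s2'), q', (w1, w2))) =
      (∑ q', ∑ w1, G ((s1, s2), q', (w1, w2))) *
        (∑ s2', ∑ w1, G ((s1, s2'), q, (w1, w2)))) := by
  classical
  set aW : W1 → ℝ := fun w1 => ∑ s1, a (s1, w1) with haW
  set bW : W2 → ℝ := fun w2 => ∑ s2, b (s2, w2) with hbW
  set T : Q → W1 × W2 → ℝ := fun q w => ∑ s' : S1 × S2, G (s', q, w) with hT
  have haW' : ∀ w1, aW w1 = ∑ s1, a (s1, w1) := fun _ => rfl
  have hbW' : ∀ w2, bW w2 = ∑ s2, b (s2, w2) := fun _ => rfl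
  have hT' : ∀ q w, T q w = ∑ s' : S1 × S2, G (s', q, w) := fun _ _ => rfl
  clear_value aW bW T
  have haWnn : ∀ w1, 0 ≤ aW w1 := fun w1 =>
    (haW' w1) ▸ (Finset.sum_nonneg fun _ _ => ha _)
  have hbWnn : ∀ w2, 0 ≤ bW w2 := fun w2 =>
    (hbW' w2) ▸ (Finset.sum_nonneg fun _ _ => hb _)
  have haaW : ∀ s1 w1, a (s1, w1) ≤ aW w1 := fun s1 w1 =>
    (haW' w1) ▸ (Finset.single_le_sum (f := fun s1' => a (s1', w1))
      (fun _ _ => ha _) (Finset.mem_univ s1))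
  have hbbW : ∀ s2 w2, b (s2, w2) ≤ bW w2 := fun s2 w2 =>
    (hbW' w2) ▸ (Finset.single_le_sum (f := fun s2' => b (s2', w2))
      (fun _ _ => hb _) (Finset.mem_univ s2))
  have hGm : ∀ s1 s2 q w1 w2, G ((s1, s2), q, (w1, w2)) ≤ a (s1, w1) * b (s2, w2) := by
    intro s1 s2 q w1 w2
    rw [← hmarg s1 s2 w1 w2]
    exact Finset.single_le_sum (f := fun q' => G ((s1, s2), q', (w1, w2)))
      (fun _ _ => hG _) (Finset.mem_univ q)
  have hstar : ∀ s1 s2 q w1 w2, G ((s1, s2), q, (w1, w2)) * (aW w1 * bW w2) =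
      a (s1, w1) * b (s2, w2) * T q (w1, w2) := by
    intro s1 s2 q w1 w2
    have h1 := hfact (s1, s2) q (w1, w2)
    have h2 : (∑ s' : S1 × S2, ∑ q', G (s', q', (w1, w2))) = aW w1 * bW w2 := by
      rw [haW' w1, hbW' w2, Fintype.sum_prod_type, Finset.sum_mul_sum]
      exact Finset.sum_congr rfl fun s1' _ => Finset.sum_congr rfl fun s2' _ =>
        hmarg s1' s2' w1 w2
    rw [h2, hmarg s1 s2 w1 w2, ← hT' q (w1, w2)] at h1
    exact h1
  have hGzero_b : ∀ s1 s2 q w1 w2, bW w2 = 0 → G ((s1, s2), q, (w1, w2)) = 0 := by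
    intro s1 s2 q w1 w2 h0
    have hb0 : b (s2, w2) = 0 := le_antisymm (h0 ▸ hbbW s2 w2) (hb _)
    have := hGm s1 s2 q w1 w2
    rw [hb0, mul_zero] at this
    exact le_antisymm this (hG _)
  have hGzero_a : ∀ s1 s2 q w1 w2, aW w1 = 0 → G ((s1, s2), q, (w1, w2)) = 0 := by
    intro s1 s2 q w1 w2 h0
    have ha0 : a (s1, w1) = 0 := le_antisymm (h0 ▸ haaW s1 w1) (ha _)
    have := hGm s1 s2 q w1 w2
    rw [ha0, zero_mul] at this
    exact le_antisymm this (hG _)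
  have claimB : ∀ s1 q w1 w2, aW w1 * (∑ s2, G ((s1, s2), q, (w1, w2))) =
      a (s1, w1) * T q (w1, w2) := by
    intro s1 q w1 w2
    rcases eq_or_lt_of_le (hbWnn w2) with h0 | h0
    · have hTz : T q (w1, w2) = 0 := by
        rw [hT']
        exact Finset.sum_eq_zero fun s' _ => hGzero_b s'.1 s'.2 q w1 w2 h0.symm
      rw [Finset.sum_eq_zero fun s2 _ => hGzero_b s1 s2 q w1 w2 h0.symm, hTz]
      ring
    · apply mul_right_cancel₀ (ne_of_gt h0)
      calc aW w1 * (∑ s2, G ((s1, s2), q, (w1, w2))) * bW w2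
          = ∑ s2, G ((s1, s2), q, (w1, w2)) * (aW w1 * bW w2) := by
            rw [Finset.mul_sum, Finset.sum_mul]
            exact Finset.sum_congr rfl fun s2 _ => by ring
        _ = ∑ s2, a (s1, w1) * b (s2, w2) * T q (w1, w2) :=
            Finset.sum_congr rfl fun s2 _ => hstar s1 s2 q w1 w2
        _ = a (s1, w1) * T q (w1, w2) * bW w2 := by
            rw [hbW' w2, Finset.mul_sum]
            exact Finset.sum_congr rfl fun s2 _ => by ring
  have claimC : ∀ s1 s2 q w1 w2, G ((s1, s2), q, (w1, w2)) * bW w2 =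
      b (s2, w2) * (∑ s2', G ((s1, s2'), q, (w1, w2))) := by
    intro s1 s2 q w1 w2
    rcases eq_or_lt_of_le (haWnn w1) with ha0 | ha0
    · rw [hGzero_a s1 s2 q w1 w2 ha0.symm,
        Finset.sum_eq_zero fun s2' _ => hGzero_a s1 s2' q w1 w2 ha0.symm]
      ring
    rcases eq_or_lt_of_le (hbWnn w2) with hb0 | hb0
    · rw [hGzero_b s1 s2 q w1 w2 hb0.symm,
        Finset.sum_eq_zero fun s2' _ => hGzero_b s1 s2' q w1 w2 hb0.symm]
      ring
    apply mul_right_cancel₀ (ne_of_gt (mul_pos ha0 hb0))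
    have hsum : (∑ s2', G ((s1, s2'), q, (w1, w2))) * (aW w1 * bW w2) =
        a (s1, w1) * bW w2 * T q (w1, w2) := by
      calc (∑ s2', G ((s1, s2'), q, (w1, w2))) * (aW w1 * bW w2)
          = ∑ s2', G ((s1, s2'), q, (w1, w2)) * (aW w1 * bW w2) := Finset.sum_mul _ _ _
        _ = ∑ s2', a (s1, w1) * b (s2', w2) * T q (w1, w2) :=
            Finset.sum_congr rfl fun s2' _ => hstar s1 s2' q w1 w2
        _ = a (s1, w1) * bW w2 * T q (w1, w2) := by
            rw [hbW' w2, Finset.mul_sum, Finset.sum_mul]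
    have h1 := hstar s1 s2 q w1 w2
    linear_combination bW w2 * h1 - b (s2, w2) * hsum
  constructor
  · intro s1 q w1
    set E : S1 → Q → ℝ := fun s1' q' => ∑ s2, ∑ w2, G ((s1', s2), q', (w1, w2)) with hE
    show E s1 q * (∑ s1', ∑ q', E s1' q') = (∑ q', E s1 q') * (∑ s1', E s1' q)
    set TT : ℝ := ∑ w2, T q (w1, w2) with hTT
    set B : ℝ := ∑ s2, ∑ w2, b (s2, w2) with hB
    have hE' : ∀ s1' q', E s1' q' = ∑ s2, ∑ w2, G ((s1', s2), q', (w1, w2)) :=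
      fun _ _ => rfl
    have hTT' : TT = ∑ w2, T q (w1, w2) := rfl
    have hB' : B = ∑ s2, ∑ w2, b (s2, w2) := rfl
    clear_value E TT B
    have keyB : ∀ s1' q', aW w1 * E s1' q' =
        a (s1', w1) * (∑ w2, T q' (w1, w2)) := by
      intro s1' q'
      calc aW w1 * E s1' q'
          = ∑ w2, aW w1 * (∑ s2, G ((s1', s2), q', (w1, w2))) := by
            rw [hE' s1' q', Finset.sum_comm, Finset.mul_sum]
        _ = ∑ w2, a (s1', w1) * T q' (w1, w2) :=
            Finset.sum_congr rfl fun w2 _ => claimB s1' q' w1 w2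
        _ = a (s1', w1) * ∑ w2, T q' (w1, w2) := (Finset.mul_sum _ _ _).symm
    have hqE : ∀ s1', (∑ q', E s1' q') = a (s1', w1) * B := by
      intro s1'
      calc ∑ q', E s1' q'
          = ∑ q', ∑ s2, ∑ w2, G ((s1', s2), q', (w1, w2)) :=
            Finset.sum_congr rfl fun q' _ => hE' s1' q'
        _ = ∑ s2, ∑ w2, ∑ q', G ((s1', s2), q', (w1, w2)) := by
            rw [sum3_rot (fun q' s2 w2 => G ((s1', s2), q', (w1, w2))),
              sum3_rot (fun w2 q' s2 => G ((s1', s2), q', (w1, w2)))]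
        _ = ∑ s2, ∑ w2, a (s1', w1) * b (s2, w2) :=
            Finset.sum_congr rfl fun s2 _ => Finset.sum_congr rfl fun w2 _ =>
              hmarg s1' s2 w1 w2
        _ = a (s1', w1) * B := by
            rw [hB']
            simp only [Finset.mul_sum]
    rw [hqE s1, Finset.sum_congr rfl fun s1' _ => hqE s1', ← Finset.sum_mul,
      ← haW' w1]
    rcases eq_or_lt_of_le (haWnn w1) with h0 | h0
    · have hEz : E s1 q = 0 := by
        rw [hE']
        exact Finset.sum_eq_zero fun s2 _ => Finset.sum_eq_zero fun w2 _ =>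
          hGzero_a s1 s2 q w1 w2 h0.symm
      have ha0 : a (s1, w1) = 0 := le_antisymm ((h0.symm) ▸ haaW s1 w1) (ha _)
      rw [hEz, ha0]
      ring
    · apply mul_right_cancel₀ (ne_of_gt h0)
      have h1 : aW w1 * E s1 q = a (s1, w1) * TT := by
        rw [hTT']; exact keyB s1 q
      have h2 : aW w1 * (∑ s1', E s1' q) = aW w1 * TT := by
        calc aW w1 * (∑ s1', E s1' q)
            = ∑ s1', aW w1 * E s1' q := Finset.mul_sum _ _ _
          _ = ∑ s1', a (s1', w1) * TT := by
              refine Finset.sum_congr rfl fun s1' _ => ?_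
              rw [hTT']; exact keyB s1' q
          _ = (∑ s1', a (s1', w1)) * TT := (Finset.sum_mul _ _ _).symm
          _ = aW w1 * TT := by rw [haW' w1]
      linear_combination (B * aW w1) * h1 - (a (s1, w1) * B) * h2
  · intro s1 s2 q w2
    set H : S2 → Q → ℝ := fun s2' q' => ∑ w1, G ((s1, s2'), q', (w1, w2)) with hH
    show H s2 q * (∑ s2', ∑ q', H s2' q') = (∑ q', H s2 q') * (∑ s2', H s2' q)
    set A1 : ℝ := ∑ w1, a (s1, w1) with hA1
    have hH' : ∀ s2' q', H s2' q' = ∑ w1, G ((s1, s2'), q', (w1, w2)) := fun _ _ => rfl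
    have hA1' : A1 = ∑ w1, a (s1, w1) := rfl
    clear_value H A1
    have hqH : ∀ s2', (∑ q', H s2' q') = A1 * b (s2', w2) := by
      intro s2'
      calc ∑ q', H s2' q'
          = ∑ q', ∑ w1, G ((s1, s2'), q', (w1, w2)) :=
            Finset.sum_congr rfl fun q' _ => hH' s2' q'
        _ = ∑ w1, ∑ q', G ((s1, s2'), q', (w1, w2)) := Finset.sum_comm
        _ = ∑ w1, a (s1, w1) * b (s2', w2) :=
            Finset.sum_congr rfl fun w1 _ => hmarg s1 s2' w1 w2
        _ = A1 * b (s2', w2) := by rw [hA1', Finset.sum_mul]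
    have keyC : ∀ s2', H s2' q * bW w2 = b (s2', w2) * (∑ s2'', H s2'' q) := by
      intro s2'
      calc H s2' q * bW w2
          = ∑ w1, G ((s1, s2'), q, (w1, w2)) * bW w2 := by
            rw [hH', Finset.sum_mul]
        _ = ∑ w1, b (s2', w2) * (∑ s2'', G ((s1, s2''), q, (w1, w2))) :=
            Finset.sum_congr rfl fun w1 _ => claimC s1 s2' q w1 w2
        _ = b (s2', w2) * ∑ w1, ∑ s2'', G ((s1, s2''), q, (w1, w2)) :=
            (Finset.mul_sum _ _ _).symm
        _ = b (s2', w2) * (∑ s2'', H s2'' q) := by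
            congr 1
            rw [Finset.sum_comm]
            exact Finset.sum_congr rfl fun s2'' _ => (hH' s2'' q).symm
    rw [hqH s2, Finset.sum_congr rfl fun s2' _ => hqH s2', ← Finset.mul_sum,
      ← hbW' w2]
    linear_combination A1 * keyC s2
end

lemma mi2_prod_pointwise {p X1 Y1 q X2 Y2 : ℝ} (hp : 0 ≤ p) (hq : 0 ≤ q)
    (hpX : p ≤ X1) (hpY : p ≤ Y1) (hqX : q ≤ X2) (hqY : q ≤ Y2) :
    p * q * Real.log (p * q / ((X1 * X2) * (Y1 * Y2))) =
      q * (p * Real.log (p / (X1 * Y1))) + p * (q * Real.log (q / (X2 * Y2))) := by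
  rcases eq_or_lt_of_le hp with h0 | h0
  · rw [← h0]; ring
  rcases eq_or_lt_of_le hq with h1 | h1
  · rw [← h1]; ring
  have hX1 : 0 < X1 := lt_of_lt_of_le h0 hpX
  have hY1 : 0 < Y1 := lt_of_lt_of_le h0 hpY
  have hX2 : 0 < X2 := lt_of_lt_of_le h1 hqX
  have hY2 : 0 < Y2 := lt_of_lt_of_le h1 hqY
  have harg : p * q / ((X1 * X2) * (Y1 * Y2)) = (p / (X1 * Y1)) * (q / (X2 * Y2)) := by
    field_simp
  rw [harg, Real.log_mul (ne_of_gt (div_pos h0 (mul_pos hX1 hY1)))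
    (ne_of_gt (div_pos h1 (mul_pos hX2 hY2)))]
  ring

lemma mi2_prod {A1 B1 A2 B2 : Type} [Fintype A1] [Fintype B1] [Fintype A2] [Fintype B2]
    {p : A1 × B1 → ℝ} {q : A2 × B2 → ℝ}
    (hp : ∀ x, 0 ≤ p x) (hq : ∀ x, 0 ≤ q x)
    (hpt : ∑ x, p x = 1) (hqt : ∑ x, q x = 1) :
    mi2 (fun x : (A1 × A2) × (B1 × B2) => p (x.1.1, x.2.1) * q (x.1.2, x.2.2)) =
      mi2 p + mi2 q := by
  classical
  have hpt' : ∑ a1, ∑ b1, p (a1, b1) = 1 := by rw [← hpt, Fintype.sum_prod_type]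
  have hqt' : ∑ a2, ∑ b2, q (a2, b2) = 1 := by rw [← hqt, Fintype.sum_prod_type]
  -- marginals of the product distribution factor
  have hXsplit : ∀ a1 a2, (∑ y : B1 × B2, p (a1, y.1) * q (a2, y.2)) =
      (∑ b1, p (a1, b1)) * (∑ b2, q (a2, b2)) := by
    intro a1 a2
    rw [Fintype.sum_prod_type, Finset.sum_mul_sum]
  have hYsplit : ∀ b1 b2, (∑ x : A1 × A2, p (x.1, b1) * q (x.2, b2)) =
      (∑ a1, p (a1, b1)) * (∑ a2, q (a2, b2)) := by
    intro b1 b2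
    rw [Fintype.sum_prod_type, Finset.sum_mul_sum]
  unfold mi2
  rw [Fintype.sum_prod_type]
  have step : ∀ a1 a2, (∑ y : B1 × B2,
      p (a1, y.1) * q (a2, y.2) * Real.log (p (a1, y.1) * q (a2, y.2) /
        ((∑ y' : B1 × B2, p (a1, y'.1) * q (a2, y'.2)) *
          (∑ x' : A1 × A2, p (x'.1, y.1) * q (x'.2, y.2))))) =
      (∑ b2, q (a2, b2)) * (∑ b1, p (a1, b1) * Real.log (p (a1, b1) /
          ((∑ b', p (a1, b')) * (∑ a', p (a', b1))))) +
      (∑ b1, p (a1, b1)) * (∑ b2, q (a2, b2) * Real.log (q (a2, b2) /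
          ((∑ b', q (a2, b')) * (∑ a', q (a', b2))))) := by
    intro a1 a2
    rw [Fintype.sum_prod_type]
    have hterm : ∀ b1 b2,
        p (a1, b1) * q (a2, b2) * Real.log (p (a1, b1) * q (a2, b2) /
          ((∑ y' : B1 × B2, p (a1, y'.1) * q (a2, y'.2)) *
            (∑ x' : A1 × A2, p (x'.1, b1) * q (x'.2, b2)))) =
        q (a2, b2) * (p (a1, b1) * Real.log (p (a1, b1) /
          ((∑ b', p (a1, b')) * (∑ a', p (a', b1))))) +
        p (a1, b1) * (q (a2, b2) * Real.log (q (a2, b2) /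
          ((∑ b', q (a2, b')) * (∑ a', q (a', b2))))) := by
      intro b1 b2
      rw [hXsplit a1 a2, hYsplit b1 b2]
      have e1 : p (a1, b1) ≤ ∑ b', p (a1, b') :=
        Finset.single_le_sum (f := fun b' => p (a1, b')) (fun _ _ => hp _)
          (Finset.mem_univ b1)
      have e2 : p (a1, b1) ≤ ∑ a', p (a', b1) :=
        Finset.single_le_sum (f := fun a' => p (a', b1)) (fun _ _ => hp _)
          (Finset.mem_univ a1)
      have e3 : q (a2, b2) ≤ ∑ b', q (a2, b') :=
        Finset.single_le_sum (f := fun b' => q (a2, b')) (fun _ _ => hq _)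
          (Finset.mem_univ b2)
      have e4 : q (a2, b2) ≤ ∑ a', q (a', b2) :=
        Finset.single_le_sum (f := fun a' => q (a', b2)) (fun _ _ => hq _)
          (Finset.mem_univ a2)
      exact mi2_prod_pointwise (hp _) (hq _) e1 e2 e3 e4
    rw [Finset.sum_congr rfl fun b1 _ => Finset.sum_congr rfl fun b2 _ => hterm b1 b2]
    rw [Finset.sum_congr rfl fun b1 _ => Finset.sum_add_distrib, Finset.sum_add_distrib]
    congr 1
    · calc ∑ b1, ∑ b2, q (a2, b2) * (p (a1, b1) * Real.log (p (a1, b1) /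
            ((∑ b', p (a1, b')) * (∑ a', p (a', b1)))))
          = ∑ b1, (∑ b2, q (a2, b2)) * (p (a1, b1) * Real.log (p (a1, b1) /
            ((∑ b', p (a1, b')) * (∑ a', p (a', b1))))) :=
            Finset.sum_congr rfl fun b1 _ => (Finset.sum_mul _ _ _).symm
        _ = (∑ b2, q (a2, b2)) * ∑ b1, (p (a1, b1) * Real.log (p (a1, b1) /
            ((∑ b', p (a1, b')) * (∑ a', p (a', b1))))) :=
            (Finset.mul_sum _ _ _).symm
    · calc ∑ b1, ∑ b2, p (a1, b1) * (q (a2, b2) * Real.log (q (a2, b2) /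
            ((∑ b', q (a2, b')) * (∑ a', q (a', b2)))))
          = ∑ b1, p (a1, b1) * ∑ b2, (q (a2, b2) * Real.log (q (a2, b2) /
            ((∑ b', q (a2, b')) * (∑ a', q (a', b2))))) :=
            Finset.sum_congr rfl fun b1 _ => (Finset.mul_sum _ _ _).symm
        _ = (∑ b1, p (a1, b1)) * ∑ b2, (q (a2, b2) * Real.log (q (a2, b2) /
            ((∑ b', q (a2, b')) * (∑ a', q (a', b2))))) :=
            (Finset.sum_mul _ _ _).symm
  rw [Finset.sum_congr rfl fun a1 _ => Finset.sum_congr rfl fun a2 _ => step a1 a2]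
  rw [Finset.sum_congr rfl fun a1 _ => Finset.sum_add_distrib, Finset.sum_add_distrib]
  congr 1
  · -- first piece sums to mi2 p
    have h1 : ∀ a1, ∑ a2, (∑ b2, q (a2, b2)) * (∑ b1, p (a1, b1) * Real.log (p (a1, b1) /
        ((∑ b', p (a1, b')) * (∑ a', p (a', b1))))) =
        (∑ b1, p (a1, b1) * Real.log (p (a1, b1) /
          ((∑ b', p (a1, b')) * (∑ a', p (a', b1))))) := by
      intro a1
      rw [← Finset.sum_mul, hqt', one_mul]
    rw [Finset.sum_congr rfl fun a1 _ => h1 a1]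
  · -- second piece sums to mi2 q
    have h2 : ∀ a1, ∑ a2, (∑ b1, p (a1, b1)) * (∑ b2, q (a2, b2) * Real.log (q (a2, b2) /
        ((∑ b', q (a2, b')) * (∑ a', q (a', b2))))) =
        (∑ b1, p (a1, b1)) * (∑ a2, ∑ b2, q (a2, b2) * Real.log (q (a2, b2) /
          ((∑ b', q (a2, b')) * (∑ a', q (a', b2))))) := by
      intro a1
      rw [Finset.mul_sum]
    rw [Finset.sum_congr rfl fun a1 _ => h2 a1, ← Finset.sum_mul, hpt', one_mul]

lemma fact_prod {S1 S2 Q1 Q2 W1 W2 : Type} [Fintype S1] [Fintype S2] [Fintype Q1]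
    [Fintype Q2] [Fintype W1] [Fintype W2]
    {F1 : S1 × Q1 × W1 → ℝ} {F2 : S2 × Q2 × W2 → ℝ}
    (hf1 : ∀ s q w, F1 (s, q, w) * (∑ s', ∑ q', F1 (s', q', w)) =
      (∑ q', F1 (s, q', w)) * (∑ s', F1 (s', q, w)))
    (hf2 : ∀ s q w, F2 (s, q, w) * (∑ s', ∑ q', F2 (s', q', w)) =
      (∑ q', F2 (s, q', w)) * (∑ s', F2 (s', q, w))) :
    ∀ (s : S1 × S2) (q : Q1 × Q2) (w : W1 × W2),
      (F1 (s.1, q.1, w.1) * F2 (s.2, q.2, w.2)) *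
        (∑ s' : S1 × S2, ∑ q' : Q1 × Q2, F1 (s'.1, q'.1, w.1) * F2 (s'.2, q'.2, w.2)) =
      (∑ q' : Q1 × Q2, F1 (s.1, q'.1, w.1) * F2 (s.2, q'.2, w.2)) *
        (∑ s' : S1 × S2, F1 (s'.1, q.1, w.1) * F2 (s'.2, q.2, w.2)) := by
  intro s q w
  have hss : (∑ s' : S1 × S2, ∑ q' : Q1 × Q2, F1 (s'.1, q'.1, w.1) * F2 (s'.2, q'.2, w.2)) =
      (∑ s1', ∑ q1', F1 (s1', q1', w.1)) * (∑ s2', ∑ q2', F2 (s2', q2', w.2)) := by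
    rw [Fintype.sum_prod_type]
    have inner : ∀ s1' s2', (∑ q' : Q1 × Q2, F1 (s1', q'.1, w.1) * F2 (s2', q'.2, w.2)) =
        (∑ q1', F1 (s1', q1', w.1)) * (∑ q2', F2 (s2', q2', w.2)) := by
      intro s1' s2'
      rw [Fintype.sum_prod_type, Finset.sum_mul_sum]
    rw [Finset.sum_congr rfl fun s1' _ => Finset.sum_congr rfl fun s2' _ => inner s1' s2']
    rw [Finset.sum_mul_sum]
  have hq' : (∑ q' : Q1 × Q2, F1 (s.1, q'.1, w.1) * F2 (s.2, q'.2, w.2)) =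
      (∑ q1', F1 (s.1, q1', w.1)) * (∑ q2', F2 (s.2, q2', w.2)) := by
    rw [Fintype.sum_prod_type, Finset.sum_mul_sum]
  have hs' : (∑ s' : S1 × S2, F1 (s'.1, q.1, w.1) * F2 (s'.2, q.2, w.2)) =
      (∑ s1', F1 (s1', q.1, w.1)) * (∑ s2', F2 (s2', q.2, w.2)) := by
    rw [Fintype.sum_prod_type, Finset.sum_mul_sum]
  rw [hss, hq', hs']
  have h1 := hf1 s.1 q.1 w.1
  have h2 := hf2 s.2 q.2 w.2
  linear_combination (F2 (s.2, q.2, w.2) * (∑ s2', ∑ q2', F2 (s2', q2', w.2))) * h1 +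
    ((∑ q1', F1 (s.1, q1', w.1)) * (∑ s1', F1 (s1', q.1, w.1))) * h2


private lemma sum_split_mul {A B : Type} [Fintype A] [Fintype B] (f : A → ℝ) (g : B → ℝ) :
    ∑ x : A × B, f x.1 * g x.2 = (∑ a, f a) * (∑ b, g b) := by
  rw [Fintype.sum_prod_type, ← Finset.sum_mul_sum]

private lemma sum_split_mul2 {A1 A2 B1 B2 : Type} [Fintype A1] [Fintype A2] [Fintype B1]
    [Fintype B2] (f : A1 → B1 → ℝ) (g : A2 → B2 → ℝ) :
    ∑ a : A1 × A2, ∑ b : B1 × B2, f a.1 b.1 * g a.2 b.2 =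
      (∑ a1, ∑ b1, f a1 b1) * (∑ a2, ∑ b2, g a2 b2) := by
  calc ∑ a : A1 × A2, ∑ b : B1 × B2, f a.1 b.1 * g a.2 b.2
      = ∑ a1, ∑ a2, (∑ b1, f a1 b1) * (∑ b2, g a2 b2) := by
        rw [Fintype.sum_prod_type]
        refine Finset.sum_congr rfl fun a1 _ => Finset.sum_congr rfl fun a2 _ => ?_
        rw [Fintype.sum_prod_type, ← Finset.sum_mul_sum]
    _ = (∑ a1, ∑ b1, f a1 b1) * (∑ a2, ∑ b2, g a2 b2) := by
        rw [Finset.sum_mul_sum]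

lemma fact_div {S Q W : Type} [Fintype S] [Fintype Q] [Fintype W]
    {F : S × Q × W → ℝ} (c : ℝ)
    (hf : ∀ s q w, F (s, q, w) * (∑ s', ∑ q', F (s', q', w)) =
      (∑ q', F (s, q', w)) * (∑ s', F (s', q, w))) :
    ∀ s q w, (F (s, q, w) / c) * (∑ s', ∑ q', F (s', q', w) / c) =
      (∑ q', F (s, q', w) / c) * (∑ s', F (s', q, w) / c) := by
  intro s q w
  simp only [← Finset.sum_div]
  rw [div_mul_div_comm, div_mul_div_comm, hf s q w]


/-- The feasible set of the `SI_GH` optimisation. -/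
def SIGHset {S Y Z : Type} [Fintype S] [Fintype Y] [Fintype Z]
    (p : S × Y × Z → ℝ) : Set ℝ :=
  { r : ℝ | ∃ (Q : Type) (instQ : Fintype Q) (e : S × Y × Z × Q → ℝ),
      (∀ x, 0 ≤ e x) ∧
      (∀ s y z, (∑ q ∈ @Finset.univ Q instQ, e (s, y, z, q)) = p (s, y, z)) ∧
      @cmi3 S Q Y _ instQ _ (fun x => ∑ z, e (x.1, x.2.2, z, x.2.1)) = 0 ∧
      @cmi3 S Q Z _ instQ _ (fun x => ∑ y, e (x.1, y, x.2.2, x.2.1)) = 0 ∧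
      r = @mi2 S Q _ instQ (fun x => ∑ y, ∑ z, e (x.1, y, z, x.2)) }

lemma SIGH_eq_sSup {S Y Z : Type} [Fintype S] [Fintype Y] [Fintype Z]
    (p : S × Y × Z → ℝ) : SIGH p = sSup (SIGHset p) := rfl

lemma zero_mem_SIGHset {S Y Z : Type} [Fintype S] [Fintype Y] [Fintype Z]
    {p : S × Y × Z → ℝ} (hp : IsProbDist p) : (0 : ℝ) ∈ SIGHset p := by
  classical
  refine ⟨PUnit, inferInstance, fun x => p (x.1, x.2.1, x.2.2.1), fun x => hp.1 _,
    ?_, ?_, ?_, ?_⟩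
  · intro s y z
    simp
  · apply (cmi3_eq_zero_iff (p := fun x : S × PUnit × Y =>
      ∑ z, p (x.1, x.2.2, z))
      (fun x => Finset.sum_nonneg fun _ _ => hp.1 _)).2
    intro a b c
    simp only [Fintype.sum_unique]
  · apply (cmi3_eq_zero_iff (p := fun x : S × PUnit × Z =>
      ∑ y, p (x.1, y, x.2.2))
      (fun x => Finset.sum_nonneg fun _ _ => hp.1 _)).2
    intro a b c
    simp only [Fintype.sum_unique]
  · have htot : ∑ s, ∑ y, ∑ z, p (s, y, z) = 1 := by
      rw [← hp.2]
      simp [Fintype.sum_prod_type]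
    symm
    unfold mi2
    refine Finset.sum_eq_zero fun s _ => Finset.sum_eq_zero fun u _ => ?_
    simp only [Fintype.sum_unique, htot]
    rcases eq_or_lt_of_le (Finset.sum_nonneg fun y (_ : y ∈ Finset.univ) =>
      Finset.sum_nonneg fun z _ => hp.1 (s, y, z)) with h0 | h0
    · rw [← h0]; ring
    · rw [mul_one, div_self (ne_of_gt h0), Real.log_one, mul_zero]

lemma SIGHset_le_log_card {S Y Z : Type} [Fintype S] [Fintype Y] [Fintype Z]
    {p : S × Y × Z → ℝ} (hp : IsProbDist p) :
    ∀ r ∈ SIGHset p, r ≤ Real.log (Fintype.card S) := by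
  rintro r ⟨Q, instQ, e, hnn, hmarg, -, -, hr⟩
  letI := instQ
  rw [hr]
  apply mi2_le_log_card (fun x => Finset.sum_nonneg fun _ _ =>
    Finset.sum_nonneg fun _ _ => hnn _)
  rw [Fintype.sum_prod_type]
  have hs : ∀ s : S, ∑ q : Q, ∑ y, ∑ z, e (s, y, z, q) = ∑ y, ∑ z, p (s, y, z) := by
    intro s
    rw [sum3_rot (fun q y z => e (s, y, z, q)), sum3_rot (fun z q y => e (s, y, z, q))]
    exact Finset.sum_congr rfl fun y _ => Finset.sum_congr rfl fun z _ => hmarg s y z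
  rw [Finset.sum_congr rfl fun s _ => hs s, ← hp.2]
  simp [Fintype.sum_prod_type]

lemma SIGHset_bddAbove {S Y Z : Type} [Fintype S] [Fintype Y] [Fintype Z]
    {p : S × Y × Z → ℝ} (hp : IsProbDist p) : BddAbove (SIGHset p) :=
  ⟨Real.log (Fintype.card S), fun r hr => SIGHset_le_log_card hp r hr⟩


lemma obj_total {S Y Z Q : Type} [Fintype S] [Fintype Y] [Fintype Z] [Fintype Q]
    {p : S × Y × Z → ℝ} {e : S × Y × Z × Q → ℝ}
    (hmarg : ∀ s y z, (∑ q, e (s, y, z, q)) = p (s, y, z))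
    (htot : ∑ x, p x = 1) :
    ∑ x : S × Q, ∑ y, ∑ z, e (x.1, y, z, x.2) = 1 := by
  rw [Fintype.sum_prod_type]
  have hs : ∀ s : S, ∑ q : Q, ∑ y, ∑ z, e (s, y, z, q) = ∑ y, ∑ z, p (s, y, z) := by
    intro s
    rw [sum3_rot (fun q y z => e (s, y, z, q)), sum3_rot (fun z q y => e (s, y, z, q))]
    exact Finset.sum_congr rfl fun y _ => Finset.sum_congr rfl fun z _ => hmarg s y z
  rw [Finset.sum_congr rfl fun s _ => hs s, ← htot]
  simp [Fintype.sum_prod_type]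

lemma add_mem_SIGHset_prod {S1 Y1 Z1 S2 Y2 Z2 : Type}
    [Fintype S1] [Fintype Y1] [Fintype Z1] [Fintype S2] [Fintype Y2] [Fintype Z2]
    {p1 : S1 × Y1 × Z1 → ℝ} {p2 : S2 × Y2 × Z2 → ℝ}
    (hp1 : IsProbDist p1) (hp2 : IsProbDist p2)
    {r1 r2 : ℝ} (h1 : r1 ∈ SIGHset p1) (h2 : r2 ∈ SIGHset p2) :
    r1 + r2 ∈ SIGHset (prodDist p1 p2) := by
  classical
  obtain ⟨Q1, instQ1, e1, hnn1, hmarg1, hcY1, hcZ1, hr1⟩ := h1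
  obtain ⟨Q2, instQ2, e2, hnn2, hmarg2, hcY2, hcZ2, hr2⟩ := h2
  letI := instQ1
  letI := instQ2
  refine ⟨Q1 × Q2, inferInstance,
    fun x => e1 (x.1.1, x.2.1.1, x.2.2.1.1, x.2.2.2.1) *
      e2 (x.1.2, x.2.1.2, x.2.2.1.2, x.2.2.2.2),
    fun x => mul_nonneg (hnn1 _) (hnn2 _), ?_, ?_, ?_, ?_⟩
  · intro s y z
    rw [show (∑ q : Q1 × Q2, e1 (s.1, y.1, z.1, q.1) * e2 (s.2, y.2, z.2, q.2)) =
        (∑ q1, e1 (s.1, y.1, z.1, q1)) * (∑ q2, e2 (s.2, y.2, z.2, q2)) from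
      sum_split_mul (fun q1 => e1 (s.1, y.1, z.1, q1))
        (fun q2 => e2 (s.2, y.2, z.2, q2)), hmarg1, hmarg2]
    rfl
  · -- Y constraint
    have hfun : (fun x : (S1 × S2) × (Q1 × Q2) × (Y1 × Y2) =>
        ∑ z : Z1 × Z2, e1 (x.1.1, x.2.2.1, z.1, x.2.1.1) *
          e2 (x.1.2, x.2.2.2, z.2, x.2.1.2)) =
        (fun x : (S1 × S2) × (Q1 × Q2) × (Y1 × Y2) =>
          (fun v : S1 × Q1 × Y1 => ∑ z1, e1 (v.1, v.2.2, z1, v.2.1))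
            (x.1.1, x.2.1.1, x.2.2.1) *
          (fun v : S2 × Q2 × Y2 => ∑ z2, e2 (v.1, v.2.2, z2, v.2.1))
            (x.1.2, x.2.1.2, x.2.2.2)) := by
      funext x
      exact sum_split_mul (fun z1 => e1 (x.1.1, x.2.2.1, z1, x.2.1.1))
        (fun z2 => e2 (x.1.2, x.2.2.2, z2, x.2.1.2))
    rw [hfun]
    apply (cmi3_eq_zero_iff (fun x => mul_nonneg
      (Finset.sum_nonneg fun _ _ => hnn1 _) (Finset.sum_nonneg fun _ _ => hnn2 _))).2
    intro a b c
    exact fact_prod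
      (F1 := fun v : S1 × Q1 × Y1 => ∑ z1, e1 (v.1, v.2.2, z1, v.2.1))
      (F2 := fun v : S2 × Q2 × Y2 => ∑ z2, e2 (v.1, v.2.2, z2, v.2.1))
      ((cmi3_eq_zero_iff (fun v => Finset.sum_nonneg fun _ _ => hnn1 _)).1 hcY1)
      ((cmi3_eq_zero_iff (fun v => Finset.sum_nonneg fun _ _ => hnn2 _)).1 hcY2)
      a b c
  · -- Z constraint
    have hfun : (fun x : (S1 × S2) × (Q1 × Q2) × (Z1 × Z2) =>
        ∑ y : Y1 × Y2, e1 (x.1.1, y.1, x.2.2.1, x.2.1.1) *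
          e2 (x.1.2, y.2, x.2.2.2, x.2.1.2)) =
        (fun x : (S1 × S2) × (Q1 × Q2) × (Z1 × Z2) =>
          (fun v : S1 × Q1 × Z1 => ∑ y1, e1 (v.1, y1, v.2.2, v.2.1))
            (x.1.1, x.2.1.1, x.2.2.1) *
          (fun v : S2 × Q2 × Z2 => ∑ y2, e2 (v.1, y2, v.2.2, v.2.1))
            (x.1.2, x.2.1.2, x.2.2.2)) := by
      funext x
      exact sum_split_mul (fun y1 => e1 (x.1.1, y1, x.2.2.1, x.2.1.1))
        (fun y2 => e2 (x.1.2, y2, x.2.2.2, x.2.1.2))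
    rw [hfun]
    apply (cmi3_eq_zero_iff (fun x => mul_nonneg
      (Finset.sum_nonneg fun _ _ => hnn1 _) (Finset.sum_nonneg fun _ _ => hnn2 _))).2
    intro a b c
    exact fact_prod
      (F1 := fun v : S1 × Q1 × Z1 => ∑ y1, e1 (v.1, y1, v.2.2, v.2.1))
      (F2 := fun v : S2 × Q2 × Z2 => ∑ y2, e2 (v.1, y2, v.2.2, v.2.1))
      ((cmi3_eq_zero_iff (fun v => Finset.sum_nonneg fun _ _ => hnn1 _)).1 hcZ1)
      ((cmi3_eq_zero_iff (fun v => Finset.sum_nonneg fun _ _ => hnn2 _)).1 hcZ2)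
      a b c
  · -- objective
    have hfun : (fun x : (S1 × S2) × (Q1 × Q2) =>
        ∑ y : Y1 × Y2, ∑ z : Z1 × Z2,
          e1 (x.1.1, y.1, z.1, x.2.1) * e2 (x.1.2, y.2, z.2, x.2.2)) =
        (fun x : (S1 × S2) × (Q1 × Q2) =>
          (fun v : S1 × Q1 => ∑ y1, ∑ z1, e1 (v.1, y1, z1, v.2)) (x.1.1, x.2.1) *
          (fun v : S2 × Q2 => ∑ y2, ∑ z2, e2 (v.1, y2, z2, v.2)) (x.1.2, x.2.2)) := by
      funext x
      exact sum_split_mul2 (fun y1 z1 => e1 (x.1.1, y1, z1, x.2.1))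
        (fun y2 z2 => e2 (x.1.2, y2, z2, x.2.2))
    rw [hfun, mi2_prod (fun v => Finset.sum_nonneg fun _ _ =>
        Finset.sum_nonneg fun _ _ => hnn1 _)
      (fun v => Finset.sum_nonneg fun _ _ => Finset.sum_nonneg fun _ _ => hnn2 _)
      (obj_total hmarg1 hp1.2) (obj_total hmarg2 hp2.2), hr1, hr2]


set_option maxHeartbeats 3000000 in
lemma sub_bound {S1 Y1 Z1 S2 Y2 Z2 : Type}
    [Fintype S1] [Fintype Y1] [Fintype Z1] [Fintype S2] [Fintype Y2] [Fintype Z2]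
    {p1 : S1 × Y1 × Z1 → ℝ} {p2 : S2 × Y2 × Z2 → ℝ}
    (hp1 : IsProbDist p1) (hp2 : IsProbDist p2) :
    ∀ r ∈ SIGHset (prodDist p1 p2),
      ∃ r1 ∈ SIGHset p1, ∃ r2 ∈ SIGHset p2, r ≤ r1 + r2 := by
  classical
  rintro r ⟨Q, instQ, e, hnn, hmarg, hcY, hcZ, hr⟩
  letI := instQ
  have hp1e : ∑ s1, ∑ y1, ∑ z1, p1 (s1, y1, z1) = 1 := by
    rw [← hp1.2]; simp [Fintype.sum_prod_type]
  have hp2e : ∑ s2, ∑ y2, ∑ z2, p2 (s2, y2, z2) = 1 := by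
    rw [← hp2.2]; simp [Fintype.sum_prod_type]
  have hmarg' : ∀ (s : S1 × S2) (y : Y1 × Y2) (z : Z1 × Z2),
      (∑ q, e (s, y, z, q)) = p1 (s.1, y.1, z.1) * p2 (s.2, y.2, z.2) :=
    fun s y z => hmarg s y z
  -- the joint objective distribution
  have hnnP : ∀ x : (S1 × S2) × Q, 0 ≤ ∑ y, ∑ z, e (x.1, y, z, x.2) :=
    fun x => Finset.sum_nonneg fun _ _ => Finset.sum_nonneg fun _ _ => hnn _
  -- per-s1 mass of the objective distribution
  have hM : ∀ s1, (∑ s2, ∑ q : Q, ∑ y, ∑ z, e ((s1, s2), y, z, q)) =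
      ∑ y1, ∑ z1, p1 (s1, y1, z1) := by
    intro s1
    have h1 : ∀ s2, (∑ q : Q, ∑ y, ∑ z, e ((s1, s2), y, z, q)) =
        (∑ y1, ∑ z1, p1 (s1, y1, z1)) * (∑ y2, ∑ z2, p2 (s2, y2, z2)) := by
      intro s2
      rw [sum3_rot (fun q y z => e ((s1, s2), y, z, q)),
        sum3_rot (fun z q y => e ((s1, s2), y, z, q))]
      rw [Finset.sum_congr rfl fun y _ => Finset.sum_congr rfl fun z _ =>
        hmarg' (s1, s2) y z]
      exact sum_split_mul2 (fun y1 z1 => p1 (s1, y1, z1)) (fun y2 z2 => p2 (s2, y2, z2))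
    rw [Finset.sum_congr rfl fun s2 _ => h1 s2, ← Finset.mul_sum, hp2e, mul_one]
  -- choose the best slice s1⋆
  obtain ⟨s1s, hws, hxs⟩ := exists_good_slice
    (fun s1 => ∑ s2, ∑ q : Q, ∑ y, ∑ z, e ((s1, s2), y, z, q))
    (fun s1 => mi2 (fun v : S2 × Q => (∑ y, ∑ z, e ((s1, v.1), y, z, v.2)) /
      (∑ s2, ∑ q : Q, ∑ y, ∑ z, e ((s1, s2), y, z, q))))
    (fun s1 => Finset.sum_nonneg fun s2 _ => Finset.sum_nonneg fun q _ => hnnP ((s1, s2), q))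
    (by rw [Finset.sum_congr rfl fun s1 _ => hM s1]; exact hp1e)
  -- chain rule and slice decomposition
  have hchain := chain_rule (P := fun x : (S1 × S2) × Q => ∑ y, ∑ z, e (x.1, y, z, x.2))
    hnnP
  have hslices := cmi3_slices (p := fun x : S2 × Q × S1 =>
    ∑ y, ∑ z, e ((x.2.2, x.1), y, z, x.2.1)) (fun x => hnnP ((x.2.2, x.1), x.2.1))
  have hle : cmi3 (fun x : S2 × Q × S1 => ∑ y, ∑ z, e ((x.2.2, x.1), y, z, x.2.1)) ≤
      mi2 (fun v : S2 × Q => (∑ y, ∑ z, e ((s1s, v.1), y, z, v.2)) /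
        (∑ s2, ∑ q : Q, ∑ y, ∑ z, e ((s1s, s2), y, z, q))) := by
    rw [hslices]
    exact hxs
  refine ⟨mi2 (fun x : S1 × Q => ∑ s2, ∑ y, ∑ z, e ((x.1, s2), y, z, x.2)), ?_,
    mi2 (fun v : S2 × Q => (∑ y, ∑ z, e ((s1s, v.1), y, z, v.2)) /
      (∑ s2, ∑ q : Q, ∑ y, ∑ z, e ((s1s, s2), y, z, q))), ?_, ?_⟩
  · -- first marginal system is feasible for p1
    refine ⟨Q, instQ, fun v : S1 × Y1 × Z1 × Q => ∑ s2, ∑ y2, ∑ z2,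
        e ((v.1, s2), (v.2.1, y2), (v.2.2.1, z2), v.2.2.2),
      fun v => Finset.sum_nonneg fun _ _ => Finset.sum_nonneg fun _ _ =>
        Finset.sum_nonneg fun _ _ => hnn _, ?_, ?_, ?_, ?_⟩
    · intro s1 y1 z1
      calc ∑ q : Q, ∑ s2, ∑ y2, ∑ z2, e ((s1, s2), (y1, y2), (z1, z2), q)
          = ∑ s2, ∑ y2, ∑ q : Q, ∑ z2, e ((s1, s2), (y1, y2), (z1, z2), q) := by
            rw [sum3_rot (fun q s2 y2 => ∑ z2, e ((s1, s2), (y1, y2), (z1, z2), q)),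
              sum3_rot (fun y2 q s2 => ∑ z2, e ((s1, s2), (y1, y2), (z1, z2), q))]
        _ = ∑ s2, ∑ y2, ∑ z2, ∑ q : Q, e ((s1, s2), (y1, y2), (z1, z2), q) :=
            Finset.sum_congr rfl fun s2 _ => Finset.sum_congr rfl fun y2 _ =>
              Finset.sum_comm
        _ = ∑ s2, ∑ y2, ∑ z2, p1 (s1, y1, z1) * p2 (s2, y2, z2) :=
            Finset.sum_congr rfl fun s2 _ => Finset.sum_congr rfl fun y2 _ =>
              Finset.sum_congr rfl fun z2 _ => hmarg' (s1, s2) (y1, y2) (z1, z2)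
        _ = p1 (s1, y1, z1) := by
            simp only [← Finset.mul_sum]
            rw [hp2e, mul_one]
    · -- Y constraint for the first system
      have hG : ∀ x : (S1 × S2) × Q × (Y1 × Y2),
          0 ≤ ∑ z : Z1 × Z2, e (x.1, x.2.2, z, x.2.1) :=
        fun x => Finset.sum_nonneg fun _ _ => hnn _
      have hmargG : ∀ s1' s2' w1 w2,
          (∑ q : Q, ∑ z : Z1 × Z2, e ((s1', s2'), (w1, w2), z, q)) =
          (∑ z1, p1 (s1', w1, z1)) * (∑ z2, p2 (s2', w2, z2)) := by
        intro s1' s2' w1 w2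
        rw [Finset.sum_comm,
          Finset.sum_congr rfl fun z _ => hmarg' (s1', s2') (w1, w2) z]
        exact sum_split_mul (fun z1 => p1 (s1', w1, z1)) (fun z2 => p2 (s2', w2, z2))
      have hconc := (marg_facts
        (fun x : (S1 × S2) × Q × (Y1 × Y2) => ∑ z : Z1 × Z2, e (x.1, x.2.2, z, x.2.1))
        (fun v : S1 × Y1 => ∑ z1, p1 (v.1, v.2, z1))
        (fun v : S2 × Y2 => ∑ z2, p2 (v.1, v.2, z2)) hG
        (fun v => Finset.sum_nonneg fun _ _ => hp1.1 _)
        (fun v => Finset.sum_nonneg fun _ _ => hp2.1 _)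
        hmargG ((cmi3_eq_zero_iff hG).1 hcY)).1
      show cmi3 (fun x : S1 × Q × Y1 => ∑ z1, ∑ s2, ∑ y2, ∑ z2,
        e ((x.1, s2), (x.2.2, y2), (z1, z2), x.2.1)) = 0
      have hfun : (fun x : S1 × Q × Y1 => ∑ z1, ∑ s2, ∑ y2, ∑ z2,
          e ((x.1, s2), (x.2.2, y2), (z1, z2), x.2.1)) =
          (fun x : S1 × Q × Y1 => ∑ s2, ∑ w2, ∑ z : Z1 × Z2,
            e ((x.1, s2), (x.2.2, w2), z, x.2.1)) := by
        funext x
        calc ∑ z1, ∑ s2, ∑ y2, ∑ z2, e ((x.1, s2), (x.2.2, y2), (z1, z2), x.2.1)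
            = ∑ s2, ∑ y2, ∑ z1, ∑ z2, e ((x.1, s2), (x.2.2, y2), (z1, z2), x.2.1) :=
              (sum3_rot (fun s2 y2 z1 =>
                ∑ z2, e ((x.1, s2), (x.2.2, y2), (z1, z2), x.2.1))).symm
          _ = ∑ s2, ∑ w2, ∑ z : Z1 × Z2, e ((x.1, s2), (x.2.2, w2), z, x.2.1) :=
              Finset.sum_congr rfl fun s2 _ => Finset.sum_congr rfl fun w2 _ =>
                (Fintype.sum_prod_type
                  (fun z : Z1 × Z2 => e ((x.1, s2), (x.2.2, w2), z, x.2.1))).symm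
      rw [hfun]
      apply (cmi3_eq_zero_iff (fun x => Finset.sum_nonneg fun _ _ =>
        Finset.sum_nonneg fun _ _ => Finset.sum_nonneg fun _ _ => hnn _)).2
      intro a b c
      exact hconc a b c
    · -- Z constraint for the first system
      have hG : ∀ x : (S1 × S2) × Q × (Z1 × Z2),
          0 ≤ ∑ y : Y1 × Y2, e (x.1, y, x.2.2, x.2.1) :=
        fun x => Finset.sum_nonneg fun _ _ => hnn _
      have hmargG : ∀ s1' s2' w1 w2,
          (∑ q : Q, ∑ y : Y1 × Y2, e ((s1', s2'), y, (w1, w2), q)) =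
          (∑ y1, p1 (s1', y1, w1)) * (∑ y2, p2 (s2', y2, w2)) := by
        intro s1' s2' w1 w2
        rw [Finset.sum_comm,
          Finset.sum_congr rfl fun y _ => hmarg' (s1', s2') y (w1, w2)]
        exact sum_split_mul (fun y1 => p1 (s1', y1, w1)) (fun y2 => p2 (s2', y2, w2))
      have hconc := (marg_facts
        (fun x : (S1 × S2) × Q × (Z1 × Z2) => ∑ y : Y1 × Y2, e (x.1, y, x.2.2, x.2.1))
        (fun v : S1 × Z1 => ∑ y1, p1 (v.1, y1, v.2))
        (fun v : S2 × Z2 => ∑ y2, p2 (v.1, y2, v.2)) hG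
        (fun v => Finset.sum_nonneg fun _ _ => hp1.1 _)
        (fun v => Finset.sum_nonneg fun _ _ => hp2.1 _)
        hmargG ((cmi3_eq_zero_iff hG).1 hcZ)).1
      show cmi3 (fun x : S1 × Q × Z1 => ∑ y1, ∑ s2, ∑ y2, ∑ z2,
        e ((x.1, s2), (y1, y2), (x.2.2, z2), x.2.1)) = 0
      have hfun : (fun x : S1 × Q × Z1 => ∑ y1, ∑ s2, ∑ y2, ∑ z2,
          e ((x.1, s2), (y1, y2), (x.2.2, z2), x.2.1)) =
          (fun x : S1 × Q × Z1 => ∑ s2, ∑ w2, ∑ y : Y1 × Y2,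
            e ((x.1, s2), y, (x.2.2, w2), x.2.1)) := by
        funext x
        calc ∑ y1, ∑ s2, ∑ y2, ∑ z2, e ((x.1, s2), (y1, y2), (x.2.2, z2), x.2.1)
            = ∑ s2, ∑ y1, ∑ y2, ∑ z2, e ((x.1, s2), (y1, y2), (x.2.2, z2), x.2.1) :=
              Finset.sum_comm
          _ = ∑ s2, ∑ z2, ∑ y1, ∑ y2, e ((x.1, s2), (y1, y2), (x.2.2, z2), x.2.1) :=
              Finset.sum_congr rfl fun s2 _ => sum3_rot
                (fun y1 y2 z2 => e ((x.1, s2), (y1, y2), (x.2.2, z2), x.2.1))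
          _ = ∑ s2, ∑ w2, ∑ y : Y1 × Y2, e ((x.1, s2), y, (x.2.2, w2), x.2.1) :=
              Finset.sum_congr rfl fun s2 _ => Finset.sum_congr rfl fun w2 _ =>
                (Fintype.sum_prod_type
                  (fun y : Y1 × Y2 => e ((x.1, s2), y, (x.2.2, w2), x.2.1))).symm
      rw [hfun]
      apply (cmi3_eq_zero_iff (fun x => Finset.sum_nonneg fun _ _ =>
        Finset.sum_nonneg fun _ _ => Finset.sum_nonneg fun _ _ => hnn _)).2
      intro a b c
      exact hconc a b c
    · -- objective of the first system
      apply congrArg mi2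
      funext x
      show ∑ s2, ∑ y, ∑ z, e ((x.1, s2), y, z, x.2) = _
      simp only [Fintype.sum_prod_type]
      rw [Finset.sum_comm]
      exact Finset.sum_congr rfl fun y1 _ => sum3_rot
        (fun s2 y2 z1 => ∑ z2, e ((x.1, s2), (y1, y2), (z1, z2), x.2))
  · -- sliced system is feasible for p2
    set c : ℝ := ∑ s2, ∑ q : Q, ∑ y, ∑ z, e ((s1s, s2), y, z, q) with hcdef
    have hc : c = ∑ y1, ∑ z1, p1 (s1s, y1, z1) := by rw [hcdef]; exact hM s1s
    have hcpos : 0 < c := by rw [hcdef]; exact hws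
    clear_value c
    refine ⟨Q, instQ, fun v : S2 × Y2 × Z2 × Q =>
        (∑ y1, ∑ z1, e ((s1s, v.1), (y1, v.2.1), (z1, v.2.2.1), v.2.2.2)) / c,
      fun v => div_nonneg (Finset.sum_nonneg fun _ _ =>
        Finset.sum_nonneg fun _ _ => hnn _) hcpos.le, ?_, ?_, ?_, ?_⟩
    · intro s2 y2 z2
      calc ∑ q : Q, (∑ y1, ∑ z1, e ((s1s, s2), (y1, y2), (z1, z2), q)) / c
          = (∑ q : Q, ∑ y1, ∑ z1, e ((s1s, s2), (y1, y2), (z1, z2), q)) / c := by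
            rw [← Finset.sum_div]
        _ = (∑ y1, ∑ z1, ∑ q : Q, e ((s1s, s2), (y1, y2), (z1, z2), q)) / c := by
            rw [sum3_rot (fun q y1 z1 => e ((s1s, s2), (y1, y2), (z1, z2), q)),
              sum3_rot (fun z1 q y1 => e ((s1s, s2), (y1, y2), (z1, z2), q))]
        _ = (∑ y1, ∑ z1, p1 (s1s, y1, z1) * p2 (s2, y2, z2)) / c := by
            rw [Finset.sum_congr rfl fun y1 _ => Finset.sum_congr rfl fun z1 _ =>
              hmarg' (s1s, s2) (y1, y2) (z1, z2)]
        _ = (c * p2 (s2, y2, z2)) / c := by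
            have h1 : (∑ y1, ∑ z1, p1 (s1s, y1, z1) * p2 (s2, y2, z2)) =
                c * p2 (s2, y2, z2) := by
              simp only [← Finset.sum_mul]
              rw [hc]
            rw [h1]
        _ = p2 (s2, y2, z2) := by
            rw [mul_comm, mul_div_assoc, div_self (ne_of_gt hcpos), mul_one]
    · -- Y constraint for the sliced system
      have hG : ∀ x : (S1 × S2) × Q × (Y1 × Y2),
          0 ≤ ∑ z : Z1 × Z2, e (x.1, x.2.2, z, x.2.1) :=
        fun x => Finset.sum_nonneg fun _ _ => hnn _
      have hmargG : ∀ s1' s2' w1 w2,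
          (∑ q : Q, ∑ z : Z1 × Z2, e ((s1', s2'), (w1, w2), z, q)) =
          (∑ z1, p1 (s1', w1, z1)) * (∑ z2, p2 (s2', w2, z2)) := by
        intro s1' s2' w1 w2
        rw [Finset.sum_comm,
          Finset.sum_congr rfl fun z _ => hmarg' (s1', s2') (w1, w2) z]
        exact sum_split_mul (fun z1 => p1 (s1', w1, z1)) (fun z2 => p2 (s2', w2, z2))
      have hconc := (marg_facts
        (fun x : (S1 × S2) × Q × (Y1 × Y2) => ∑ z : Z1 × Z2, e (x.1, x.2.2, z, x.2.1))
        (fun v : S1 × Y1 => ∑ z1, p1 (v.1, v.2, z1))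
        (fun v : S2 × Y2 => ∑ z2, p2 (v.1, v.2, z2)) hG
        (fun v => Finset.sum_nonneg fun _ _ => hp1.1 _)
        (fun v => Finset.sum_nonneg fun _ _ => hp2.1 _)
        hmargG ((cmi3_eq_zero_iff hG).1 hcY)).2
      show cmi3 (fun x : S2 × Q × Y2 => ∑ z2,
        (∑ y1, ∑ z1, e ((s1s, x.1), (y1, x.2.2), (z1, z2), x.2.1)) / c) = 0
      have hfun : (fun x : S2 × Q × Y2 => ∑ z2,
          (∑ y1, ∑ z1, e ((s1s, x.1), (y1, x.2.2), (z1, z2), x.2.1)) / c) =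
          (fun x : S2 × Q × Y2 =>
            (∑ w1, ∑ z : Z1 × Z2, e ((s1s, x.1), (w1, x.2.2), z, x.2.1)) / c) := by
        funext x
        rw [← Finset.sum_div]
        congr 1
        calc ∑ z2, ∑ y1, ∑ z1, e ((s1s, x.1), (y1, x.2.2), (z1, z2), x.2.1)
            = ∑ z1, ∑ z2, ∑ y1, e ((s1s, x.1), (y1, x.2.2), (z1, z2), x.2.1) :=
              sum3_rot (fun z2 y1 z1 => e ((s1s, x.1), (y1, x.2.2), (z1, z2), x.2.1))
          _ = ∑ y1, ∑ z1, ∑ z2, e ((s1s, x.1), (y1, x.2.2), (z1, z2), x.2.1) :=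
              sum3_rot (fun z1 z2 y1 => e ((s1s, x.1), (y1, x.2.2), (z1, z2), x.2.1))
          _ = ∑ w1, ∑ z : Z1 × Z2, e ((s1s, x.1), (w1, x.2.2), z, x.2.1) :=
              Finset.sum_congr rfl fun w1 _ => (Fintype.sum_prod_type
                (fun z : Z1 × Z2 => e ((s1s, x.1), (w1, x.2.2), z, x.2.1))).symm
      rw [hfun]
      apply (cmi3_eq_zero_iff (fun x => div_nonneg (Finset.sum_nonneg fun _ _ =>
        Finset.sum_nonneg fun _ _ => hnn _) hcpos.le)).2
      intro a b c'
      exact fact_div (F := fun x : S2 × Q × Y2 =>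
          ∑ w1, ∑ z : Z1 × Z2, e ((s1s, x.1), (w1, x.2.2), z, x.2.1)) c
        (fun s q w => hconc s1s s q w) a b c'
    · -- Z constraint for the sliced system
      have hG : ∀ x : (S1 × S2) × Q × (Z1 × Z2),
          0 ≤ ∑ y : Y1 × Y2, e (x.1, y, x.2.2, x.2.1) :=
        fun x => Finset.sum_nonneg fun _ _ => hnn _
      have hmargG : ∀ s1' s2' w1 w2,
          (∑ q : Q, ∑ y : Y1 × Y2, e ((s1', s2'), y, (w1, w2), q)) =
          (∑ y1, p1 (s1', y1, w1)) * (∑ y2, p2 (s2', y2, w2)) := by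
        intro s1' s2' w1 w2
        rw [Finset.sum_comm,
          Finset.sum_congr rfl fun y _ => hmarg' (s1', s2') y (w1, w2)]
        exact sum_split_mul (fun y1 => p1 (s1', y1, w1)) (fun y2 => p2 (s2', y2, w2))
      have hconc := (marg_facts
        (fun x : (S1 × S2) × Q × (Z1 × Z2) => ∑ y : Y1 × Y2, e (x.1, y, x.2.2, x.2.1))
        (fun v : S1 × Z1 => ∑ y1, p1 (v.1, y1, v.2))
        (fun v : S2 × Z2 => ∑ y2, p2 (v.1, y2, v.2)) hG
        (fun v => Finset.sum_nonneg fun _ _ => hp1.1 _)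
        (fun v => Finset.sum_nonneg fun _ _ => hp2.1 _)
        hmargG ((cmi3_eq_zero_iff hG).1 hcZ)).2
      show cmi3 (fun x : S2 × Q × Z2 => ∑ y2,
        (∑ y1, ∑ z1, e ((s1s, x.1), (y1, y2), (z1, x.2.2), x.2.1)) / c) = 0
      have hfun : (fun x : S2 × Q × Z2 => ∑ y2,
          (∑ y1, ∑ z1, e ((s1s, x.1), (y1, y2), (z1, x.2.2), x.2.1)) / c) =
          (fun x : S2 × Q × Z2 =>
            (∑ w1, ∑ y : Y1 × Y2, e ((s1s, x.1), y, (w1, x.2.2), x.2.1)) / c) := by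
        funext x
        rw [← Finset.sum_div]
        congr 1
        calc ∑ y2, ∑ y1, ∑ z1, e ((s1s, x.1), (y1, y2), (z1, x.2.2), x.2.1)
            = ∑ z1, ∑ y2, ∑ y1, e ((s1s, x.1), (y1, y2), (z1, x.2.2), x.2.1) :=
              sum3_rot (fun y2 y1 z1 => e ((s1s, x.1), (y1, y2), (z1, x.2.2), x.2.1))
          _ = ∑ z1, ∑ y1, ∑ y2, e ((s1s, x.1), (y1, y2), (z1, x.2.2), x.2.1) :=
              Finset.sum_congr rfl fun z1 _ => Finset.sum_comm
          _ = ∑ w1, ∑ y : Y1 × Y2, e ((s1s, x.1), y, (w1, x.2.2), x.2.1) :=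
              Finset.sum_congr rfl fun w1 _ => (Fintype.sum_prod_type
                (fun y : Y1 × Y2 => e ((s1s, x.1), y, (w1, x.2.2), x.2.1))).symm
      rw [hfun]
      apply (cmi3_eq_zero_iff (fun x => div_nonneg (Finset.sum_nonneg fun _ _ =>
        Finset.sum_nonneg fun _ _ => hnn _) hcpos.le)).2
      intro a b c'
      exact fact_div (F := fun x : S2 × Q × Z2 =>
          ∑ w1, ∑ y : Y1 × Y2, e ((s1s, x.1), y, (w1, x.2.2), x.2.1)) c
        (fun s q w => hconc s1s s q w) a b c'
    · -- objective of the sliced system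
      apply congrArg mi2
      funext v
      show (∑ y, ∑ z, e ((s1s, v.1), y, z, v.2)) / c = ∑ y2, ∑ z2,
        (∑ y1, ∑ z1, e ((s1s, v.1), (y1, y2), (z1, z2), v.2)) / c
      simp only [← Finset.sum_div]
      congr 1
      calc ∑ y, ∑ z, e ((s1s, v.1), y, z, v.2)
          = ∑ y1, ∑ y2, ∑ z1, ∑ z2, e ((s1s, v.1), (y1, y2), (z1, z2), v.2) := by
            simp only [Fintype.sum_prod_type]
        _ = ∑ y1, ∑ y2, ∑ z2, ∑ z1, e ((s1s, v.1), (y1, y2), (z1, z2), v.2) :=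
            Finset.sum_congr rfl fun y1 _ => Finset.sum_congr rfl fun y2 _ =>
              Finset.sum_comm
        _ = ∑ y2, ∑ z2, ∑ y1, ∑ z1, e ((s1s, v.1), (y1, y2), (z1, z2), v.2) :=
            (sum3_rot (fun y2 z2 y1 =>
              ∑ z1, e ((s1s, v.1), (y1, y2), (z1, z2), v.2))).symm
  · rw [hr, hchain]
    exact add_le_add_right hle _


/-- `SI_GH` is subadditive under independent combination, and hence (together
with superadditivity) additive. -/
theorem SIGH_subadditive_and_additive
    {S1 Y1 Z1 S2 Y2 Z2 : Type} [Fintype S1] [Fintype Y1] [Fintype Z1]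
    [Fintype S2] [Fintype Y2] [Fintype Z2]
    (p1 : S1 × Y1 × Z1 → ℝ) (p2 : S2 × Y2 × Z2 → ℝ)
    (hp1 : IsProbDist p1) (hp2 : IsProbDist p2) :
    SIGH (prodDist p1 p2) ≤ SIGH p1 + SIGH p2 ∧
    SIGH (prodDist p1 p2) = SIGH p1 + SIGH p2 := by
  classical
  have hprod : IsProbDist (prodDist p1 p2) := by
    constructor
    · exact fun x => mul_nonneg (hp1.1 _) (hp2.1 _)
    · have hE := Fintype.sum_equiv
        (⟨fun x => ((x.1.1, x.2.1), (x.1.2.1, x.2.2.1), (x.1.2.2, x.2.2.2)),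
          fun y => ((y.1.1, y.2.1.1, y.2.2.1), (y.1.2, y.2.1.2, y.2.2.2)),
          fun x => rfl, fun y => rfl⟩ : (S1 × Y1 × Z1) × (S2 × Y2 × Z2) ≃
            (S1 × S2) × (Y1 × Y2) × (Z1 × Z2))
        (fun x : (S1 × Y1 × Z1) × (S2 × Y2 × Z2) => p1 x.1 * p2 x.2)
        (prodDist p1 p2) (fun x => rfl)
      rw [← hE, sum_split_mul (fun a : S1 × Y1 × Z1 => p1 a)
        (fun b : S2 × Y2 × Z2 => p2 b), hp1.2, hp2.2, mul_one]
  have hsub : SIGH (prodDist p1 p2) ≤ SIGH p1 + SIGH p2 := by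
    rw [SIGH_eq_sSup, SIGH_eq_sSup, SIGH_eq_sSup]
    apply csSup_le ⟨0, zero_mem_SIGHset hprod⟩
    intro r hrmem
    obtain ⟨r1, h1, r2, h2, hle⟩ := sub_bound hp1 hp2 r hrmem
    calc r ≤ r1 + r2 := hle
      _ ≤ sSup (SIGHset p1) + sSup (SIGHset p2) :=
        add_le_add (le_csSup (SIGHset_bddAbove hp1) h1)
          (le_csSup (SIGHset_bddAbove hp2) h2)
  have hsuper : SIGH p1 + SIGH p2 ≤ SIGH (prodDist p1 p2) := by
    rw [SIGH_eq_sSup, SIGH_eq_sSup, SIGH_eq_sSup]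
    have key : ∀ r1 ∈ SIGHset p1, ∀ r2 ∈ SIGHset p2,
        r1 + r2 ≤ sSup (SIGHset (prodDist p1 p2)) := fun r1 h1 r2 h2 =>
      le_csSup (SIGHset_bddAbove hprod) (add_mem_SIGHset_prod hp1 hp2 h1 h2)
    have h1 : sSup (SIGHset p1) ≤
        sSup (SIGHset (prodDist p1 p2)) - sSup (SIGHset p2) := by
      apply csSup_le ⟨0, zero_mem_SIGHset hp1⟩
      intro r1 hr1
      rw [le_sub_comm]
      apply csSup_le ⟨0, zero_mem_SIGHset hp2⟩
      intro r2 hr2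
      rw [le_sub_iff_add_le, add_comm]
      exact key r1 hr1 r2 hr2
    linarith
  exact ⟨hsub, le_antisymm hsub hsuper⟩
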